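/- The elasticity of any Leamer monoid S_Γ^s is infinite: for every real number R, there exists a nonzero element (x,n) ∈ S_Γ^s whose maximum factorization length divided by its minimum factorization length exceeds R. -/
import Mathlib


/-- The Leamer monoid as a subset of ℕ × ℕ: (0,0) together with all (x,n), n ≥ 1,
such that x + i*s ∈ Γ for all 0 ≤ i ≤ n. -/
def Leamer (Γ : AddSubmonoid ℕ) (s : ℕ) : Set (ℕ × ℕ) :=
  {p | p = (0, 0) ∨ (1 ≤ p.2 ∧ ∀ i ≤ p.2, p.1 + i * s ∈ Γ)}

/-- An irreducible (atom) of a subset S of ℕ × ℕ: a nonzero element of S that is not the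
sum of two nonzero elements of S. -/
def LIrred (S : Set (ℕ × ℕ)) (z : ℕ × ℕ) : Prop :=
  z ∈ S ∧ z ≠ 0 ∧ ∀ a b : ℕ × ℕ, a ∈ S → b ∈ S → a ≠ 0 → b ≠ 0 → z ≠ a + b

/-- A reducible element of S: an element of S that is the sum of two nonzero elements of S. -/
def LReducible (S : Set (ℕ × ℕ)) (z : ℕ × ℕ) : Prop :=
  z ∈ S ∧ ∃ a b : ℕ × ℕ, a ∈ S ∧ b ∈ S ∧ a ≠ 0 ∧ b ≠ 0 ∧ z = a + b

/-- The set of factorization lengths of z into irreducibles of S. -/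
def LSet (S : Set (ℕ × ℕ)) (z : ℕ × ℕ) : Set ℕ :=
  {r | ∃ l : Multiset (ℕ × ℕ), Multiset.card l = r ∧ (∀ a ∈ l, LIrred S a) ∧ l.sum = z}

/-- The Delta set of z: differences of successive factorization lengths. -/
def LDelta (S : Set (ℕ × ℕ)) (z : ℕ × ℕ) : Set ℕ :=
  {d | ∃ a b, a ∈ LSet S z ∧ b ∈ LSet S z ∧ a < b ∧
    (∀ c, a < c → c < b → c ∉ LSet S z) ∧ d = b - a}

/-- The Delta set of the monoid S. -/
def LDeltaMonoid (S : Set (ℕ × ℕ)) : Set ℕ :=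
  {d | ∃ z, z ∈ S ∧ z ≠ 0 ∧ d ∈ LDelta S z}

/-- The Frobenius number of a numerical monoid Γ. -/
noncomputable def Frob (Γ : AddSubmonoid ℕ) : ℕ := sSup {x | x ∉ Γ}

/-- The numerical monoid generated by the arithmetic sequence m, m+s, ..., m+ks. -/
def ArithGamma (m k s : ℕ) : AddSubmonoid ℕ :=
  AddSubmonoid.closure {v | ∃ j ≤ k, v = m + j * s}

namespace Stmt8Aux

lemma card_le_sum (l : Multiset ℕ) (h : ∀ x ∈ l, 1 ≤ x) : Multiset.card l ≤ l.sum := by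
  induction l using Multiset.induction with
  | empty => simp
  | cons a t ih =>
    simp only [Multiset.card_cons, Multiset.sum_cons]
    have h1 : 1 ≤ a := h a (Multiset.mem_cons_self a t)
    have h2 := ih (fun x hx => h x (Multiset.mem_cons_of_mem hx))
    omega

lemma sum_snd (l : Multiset (ℕ × ℕ)) : (l.map Prod.snd).sum = l.sum.2 := by
  induction l using Multiset.induction with
  | empty => simp
  | cons a t ih => simp [ih]

variable {Γ : AddSubmonoid ℕ} {s : ℕ}

lemma snd_pos {p : ℕ × ℕ} (hp : p ∈ Leamer Γ s) (hp0 : p ≠ 0) : 1 ≤ p.2 := by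
  rcases hp with h | h
  · exact absurd h hp0
  · exact h.1

lemma mem_one {x : ℕ} (h0 : x ∈ Γ) (h1 : x + s ∈ Γ) : ((x, 1) : ℕ × ℕ) ∈ Leamer Γ s := by
  refine Or.inr ⟨le_refl 1, fun i hi => ?_⟩
  interval_cases i
  · simpa using h0
  · simpa using h1

lemma irred_one {x : ℕ} (h0 : x ∈ Γ) (h1 : x + s ∈ Γ) : LIrred (Leamer Γ s) (x, 1) := by
  refine ⟨mem_one h0 h1, ?_, ?_⟩
  · intro h; exact absurd (congrArg Prod.snd h) (by simp)
  · intro a b ha hb ha0 hb0 h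
    have h2 : a.2 + b.2 = 1 := by
      have := congrArg Prod.snd h; simpa using this.symm
    have := snd_pos ha ha0
    have := snd_pos hb hb0
    omega

end Stmt8Aux

namespace Stmt8Aux

theorem main (Γ : AddSubmonoid ℕ) (hΓ : {x : ℕ | x ∉ Γ}.Finite) (s : ℕ) (hs : s ∉ Γ)
    (R : ℝ) :
    ∃ z : ℕ × ℕ, z ∈ Leamer Γ s ∧ z ≠ 0 ∧
      ∃ a b : ℕ, a ∈ LSet (Leamer Γ s) z ∧ b ∈ LSet (Leamer Γ s) z ∧
        (∀ r ∈ LSet (Leamer Γ s) z, r ≤ a) ∧ (∀ r ∈ LSet (Leamer Γ s) z, b ≤ r) ∧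
        R < (a : ℝ) / (b : ℝ) := by
  classical
  set S := Leamer Γ s with hS
  -- s ≥ 1
  have hs1 : 1 ≤ s := by
    rcases Nat.eq_zero_or_pos s with h | h
    · exact absurd (h ▸ Γ.zero_mem) hs
    · exact h
  -- Frobenius-type bound
  set F : ℕ := sSup {x : ℕ | x ∉ Γ} with hF
  have hbdd : BddAbove {x : ℕ | x ∉ Γ} := hΓ.bddAbove
  have hFmem : ∀ x : ℕ, F < x → x ∈ Γ := by
    intro x hx
    by_contra hxΓ
    exact absurd (le_csSup hbdd hxΓ) (not_le.mpr hx)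
  -- the set of full columns
  set T : Set ℕ := {x : ℕ | ∀ i : ℕ, x + i * s ∈ Γ} with hT
  have hTne : (F + 1) ∈ T := by
    intro i
    exact hFmem _ (by nlinarith)
  set xf : ℕ := sInf T with hxf
  have hxfT : xf ∈ T := Nat.sInf_mem ⟨F + 1, hTne⟩
  have hxf_pos : 1 ≤ xf := by
    rcases Nat.eq_zero_or_pos xf with h | h
    · have := hxfT 1
      rw [h] at this
      simp at this
      exact absurd this hs
    · exact h
  -- membership of full columns
  have hmemT : ∀ n : ℕ, 1 ≤ n → ((xf, n) : ℕ × ℕ) ∈ S := by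
    intro n hn
    exact Or.inr ⟨hn, fun i _ => hxfT i⟩
  -- tall columns at xf are irreducible
  have htall : ∀ N : ℕ, 2 * F + 1 ≤ N → LIrred S (xf, N) := by
    intro N hN
    refine ⟨hmemT N (by omega), ?_, ?_⟩
    · intro h
      have := congrArg Prod.snd h
      simp at this
      omega
    · rintro ⟨a1, a2⟩ ⟨b1, b2⟩ ha hb ha0 hb0 h
      have h1 : a1 + b1 = xf := by
        have := congrArg Prod.fst h; simpa using this.symm
      have h2 : a2 + b2 = N := by
        have := congrArg Prod.snd h; simpa using this.symm
      have ha2 : 1 ≤ a2 := snd_pos ha ha0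
      have hb2 : 1 ≤ b2 := snd_pos hb hb0
      have haΓ : ∀ i ≤ a2, a1 + i * s ∈ Γ := by
        rcases ha with h' | h'
        · exfalso; exact ha0 (by simpa using h')
        · exact h'.2
      have hbΓ : ∀ i ≤ b2, b1 + i * s ∈ Γ := by
        rcases hb with h' | h'
        · exfalso; exact hb0 (by simpa using h')
        · exact h'.2
      -- one of the parts has height ≥ F+1, and its base is in T
      have key : ∀ c1 c2 : ℕ, F + 1 ≤ c2 → (∀ i ≤ c2, c1 + i * s ∈ Γ) → c1 ∈ T := by
        intro c1 c2 hc2 hc i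
        by_cases hi : i ≤ c2
        · exact hc i hi
        · exact hFmem _ (by nlinarith [hs1, not_le.mp hi])
      have hxf_le : xf ≤ a1 ∨ xf ≤ b1 := by
        rcases le_or_gt (F + 1) a2 with hc | hc
        · exact Or.inl (Nat.sInf_le (key a1 a2 hc haΓ))
        · have : F + 1 ≤ b2 := by omega
          exact Or.inr (Nat.sInf_le (key b1 b2 this hbΓ))
      -- the other part has positive base
      have ha1 : 1 ≤ a1 := by
        by_contra h'
        have ha10 : a1 = 0 := by omega
        have h3 := haΓ 1 ha2
        rw [ha10, Nat.zero_add, Nat.one_mul] at h3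
        exact hs h3
      have hb1 : 1 ≤ b1 := by
        by_contra h'
        have hb10 : b1 = 0 := by omega
        have h3 := hbΓ 1 hb2
        rw [hb10, Nat.zero_add, Nat.one_mul] at h3
        exact hs h3
      omega
  -- choose parameters
  set n : ℕ := 2 * F + 4 + 2 * ⌈R⌉₊ with hn
  have hn1 : 1 ≤ n := by omega
  have hFΓ : (F + 1 : ℕ) ∈ Γ := hFmem _ (by omega)
  have hFsΓ : (F + 1 + s : ℕ) ∈ Γ := hFmem _ (by omega)
  set m : ℕ := (n - 1) * (F + 1) with hm
  have hmΓ : m ∈ Γ := by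
    have := AddSubmonoid.nsmul_mem Γ hFΓ (n - 1)
    simpa [nsmul_eq_mul] using this
  have hmF : F < m := by
    have h1 : 2 * F + 3 ≤ n - 1 := by omega
    calc F < F + 1 := by omega
    _ ≤ (n - 1) * (F + 1) := Nat.le_mul_of_pos_left _ (by omega)
  have hmsΓ : m + s ∈ Γ := hFmem _ (by omega)
  have hxf0Γ : xf ∈ Γ := by have := hxfT 0; simpa using this
  have hxf1Γ : xf + s ∈ Γ := by have := hxfT 1; simpa using this
  -- the element
  refine ⟨(xf + m, n), ?_, ?_, n, 2, ?_, ?_, ?_, ?_, ?_⟩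
  · -- membership
    refine Or.inr ⟨hn1, fun i _ => ?_⟩
    have : xf + i * s + m ∈ Γ := Γ.add_mem (hxfT i) hmΓ
    have he : (xf + m, n).1 + i * s = xf + i * s + m := by omega
    rw [he]; exact this
  · -- nonzero
    intro h
    have := congrArg Prod.snd h
    simp at this
    omega
  · -- length n factorization
    refine ⟨(xf, 1) ::ₘ Multiset.replicate (n - 1) ((F + 1 : ℕ), (1 : ℕ)), ?_, ?_, ?_⟩
    · simp; omega
    · intro a haa
      rcases Multiset.mem_cons.mp haa with h | h
      · rw [h]; exact irred_one hxf0Γ hxf1Γ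
      · rw [Multiset.eq_of_mem_replicate h]; exact irred_one hFΓ hFsΓ
    · rw [Multiset.sum_cons, Multiset.sum_replicate, Prod.smul_mk]
      refine Prod.ext ?_ ?_
      · simp [smul_eq_mul, hm]
      · simp [smul_eq_mul]; omega
  · -- length 2 factorization
    refine ⟨{(xf, n - 1), (m, 1)}, ?_, ?_, ?_⟩
    · rfl
    · intro a haa
      rcases Multiset.mem_cons.mp haa with h | h
      · rw [h]; exact htall (n - 1) (by omega)
      · rw [Multiset.mem_singleton.mp h]; exact irred_one hmΓ hmsΓ
    · show (xf, n - 1) + ((m, 1) + 0) = (xf + m, n)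
      refine Prod.ext ?_ ?_
      · simp
      · simp; omega
  · -- n is the max length
    rintro r ⟨l, hcard, hirr, hsum⟩
    have h1 : ∀ x ∈ l.map Prod.snd, 1 ≤ x := by
      intro x hx
      rcases Multiset.mem_map.mp hx with ⟨p, hp, rfl⟩
      exact snd_pos (hirr p hp).1 (hirr p hp).2.1
    have h2 := card_le_sum _ h1
    rw [Multiset.card_map, sum_snd, hsum, hcard] at h2
    exact h2
  · -- 2 is the min length
    rintro r ⟨l, hcard, hirr, hsum⟩
    by_contra hr
    interval_cases r
    · rw [Multiset.card_eq_zero.mp hcard] at hsum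
      have := congrArg Prod.snd hsum
      simp at this
      omega
    · rcases Multiset.card_eq_one.mp hcard with ⟨w, rfl⟩
      simp only [Multiset.sum_singleton] at hsum
      have hw := hirr w (Multiset.mem_singleton_self w)
      refine hw.2.2 (xf, n - 1) (m, 1) (hmemT (n - 1) (by omega)) (mem_one hmΓ hmsΓ) ?_ ?_ ?_
      · intro h; have := congrArg Prod.snd h; simp at this; omega
      · intro h; have := congrArg Prod.snd h; simp at this
      · rw [hsum]
        refine Prod.ext (by simp) ?_
        simp; omega
  · -- the ratio
    have hle : ((2 * ⌈R⌉₊ + 2 : ℕ) : ℝ) ≤ (n : ℝ) := by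
      exact_mod_cast Nat.le_of_lt_succ (by omega)
    have hR : R ≤ (⌈R⌉₊ : ℝ) := Nat.le_ceil R
    have : ((2 * ⌈R⌉₊ + 2 : ℕ) : ℝ) = 2 * (⌈R⌉₊ : ℝ) + 2 := by push_cast; ring
    rw [this] at hle
    rw [show ((2:ℕ):ℝ) = 2 by norm_num]
    rw [lt_div_iff₀ (by norm_num)]
    linarith

end Stmt8Aux

theorem stmt8 (Γ : AddSubmonoid ℕ) (hΓ : {x : ℕ | x ∉ Γ}.Finite) (s : ℕ) (hs : s ∉ Γ)
    (R : ℝ) :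
    ∃ z : ℕ × ℕ, z ∈ Leamer Γ s ∧ z ≠ 0 ∧
      ∃ a b : ℕ, a ∈ LSet (Leamer Γ s) z ∧ b ∈ LSet (Leamer Γ s) z ∧
        (∀ r ∈ LSet (Leamer Γ s) z, r ≤ a) ∧ (∀ r ∈ LSet (Leamer Γ s) z, b ≤ r) ∧
        R < (a : ℝ) / (b : ℝ) := Stmt8Aux.main Γ hΓ s hs R
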